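/- If nested programs P and Q are not strongly equivalent, then there exists a program R, each of whose rules has a literal as head and either a literal or ⊤ as body, such that P ∪ R and Q ∪ R have different answer sets. -/
import Mathlib


open scoped Classical

inductive Lit where
  | pos : ℕ → Lit
  | neg : ℕ → Lit
deriving DecidableEq

inductive Fml where
  | bot : Fml
  | top : Fml
  | lit : Lit → Fml
  | not : Fml → Fml
  | conj : Fml → Fml → Fml
  | disj : Fml → Fml → Fml
deriving DecidableEq

structure Rule where
  head : Fml
  body : Fml
deriving DecidableEq

abbrev Prog := Set Rule

/-- A set of literals is consistent if it contains no complementary pair. -/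
def Consistent (X : Set Lit) : Prop :=
  ∀ a : ℕ, ¬ (Lit.pos a ∈ X ∧ Lit.neg a ∈ X)

def Sat (X : Set Lit) : Fml → Prop
  | Fml.bot => False
  | Fml.top => True
  | Fml.lit l => l ∈ X
  | Fml.not F => ¬ Sat X F
  | Fml.conj F G => Sat X F ∧ Sat X G
  | Fml.disj F G => Sat X F ∨ Sat X G

def SatRule (X : Set Lit) (r : Rule) : Prop := Sat X r.body → Sat X r.head

def SatProg (X : Set Lit) (P : Prog) : Prop := ∀ r ∈ P, SatRule X r

/-- The reduct of a formula relative to X. -/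
noncomputable def Reduct (X : Set Lit) : Fml → Fml
  | Fml.bot => Fml.bot
  | Fml.top => Fml.top
  | Fml.lit l => Fml.lit l
  | Fml.not F => if Sat X F then Fml.bot else Fml.top
  | Fml.conj F G => Fml.conj (Reduct X F) (Reduct X G)
  | Fml.disj F G => Fml.disj (Reduct X F) (Reduct X G)

noncomputable def ReductRule (X : Set Lit) (r : Rule) : Rule :=
  ⟨Reduct X r.head, Reduct X r.body⟩

noncomputable def ReductProg (X : Set Lit) (P : Prog) : Prog :=
  ReductRule X '' P

/-- Y is an answer set for P: Y is minimal among consistent sets satisfying the reduct of P w.r.t. Y. -/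
def AnswerSet (Y : Set Lit) (P : Prog) : Prop :=
  Consistent Y ∧ SatProg Y (ReductProg Y P) ∧
    ∀ Z : Set Lit, Consistent Z → SatProg Z (ReductProg Y P) → Z ⊆ Y → Z = Y

def SEModel (P : Prog) (X Y : Set Lit) : Prop :=
  Consistent X ∧ Consistent Y ∧ X ⊆ Y ∧ SatProg Y P ∧ SatProg X (ReductProg Y P)

def StrongEq (P Q : Prog) : Prop :=
  ∀ R : Prog, ∀ Y : Set Lit, AnswerSet Y (P ∪ R) ↔ AnswerSet Y (Q ∪ R)

def Fml.negFree : Fml → Prop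
  | Fml.bot => True
  | Fml.top => True
  | Fml.lit l => ∃ a, l = Lit.pos a
  | Fml.not F => F.negFree
  | Fml.conj F G => F.negFree ∧ G.negFree
  | Fml.disj F G => F.negFree ∧ G.negFree

def ProgNegFree (P : Prog) : Prop := ∀ r ∈ P, r.head.negFree ∧ r.body.negFree

/-- The set of atoms (positive literals) in a set of literals. -/
def PosLits (Z : Set Lit) : Set Lit := {l ∈ Z | ∃ a, l = Lit.pos a}

def AtomsOnly (Z : Set Lit) : Prop := ∀ l ∈ Z, ∃ a, l = Lit.pos a

/- ---------- auxiliary lemmas ---------- -/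

lemma sat_reduct_self (X : Set Lit) (F : Fml) : Sat X (Reduct X F) ↔ Sat X F := by
  induction F with
  | bot => simp [Reduct]
  | top => simp [Reduct]
  | lit l => simp [Reduct]
  | not F ih =>
      simp only [Reduct]
      split_ifs with h <;> simp [Sat, h]
  | conj F G ihF ihG => simp [Reduct, Sat, ihF, ihG]
  | disj F G ihF ihG => simp [Reduct, Sat, ihF, ihG]

lemma satProg_reduct_self (Y : Set Lit) (P : Prog) :
    SatProg Y (ReductProg Y P) ↔ SatProg Y P := by
  constructor
  · intro h r hr hb
    have := h (ReductRule Y r) ⟨r, hr, rfl⟩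
    exact (sat_reduct_self Y r.head).mp (this ((sat_reduct_self Y r.body).mpr hb))
  · rintro h r ⟨s, hs, rfl⟩ hb
    exact (sat_reduct_self Y s.head).mpr (h s hs ((sat_reduct_self Y s.body).mp hb))

lemma satProg_union (X : Set Lit) (A B : Prog) :
    SatProg X (A ∪ B) ↔ SatProg X A ∧ SatProg X B := by
  constructor
  · intro h
    exact ⟨fun r hr => h r (Or.inl hr), fun r hr => h r (Or.inr hr)⟩
  · rintro ⟨h1, h2⟩ r (hr | hr)
    exacts [h1 r hr, h2 r hr]

lemma reductProg_union (Y : Set Lit) (A B : Prog) :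
    ReductProg Y (A ∪ B) = ReductProg Y A ∪ ReductProg Y B :=
  Set.image_union _ _ _

lemma satProg_reduct_union (X Y : Set Lit) (A B : Prog) :
    SatProg X (ReductProg Y (A ∪ B)) ↔
      SatProg X (ReductProg Y A) ∧ SatProg X (ReductProg Y B) := by
  rw [reductProg_union, satProg_union]

lemma reductProg_id (Y : Set Lit) (R : Prog)
    (h : ∀ r ∈ R, ReductRule Y r = r) : ReductProg Y R = R := by
  ext r
  constructor
  · rintro ⟨s, hs, rfl⟩; rw [h s hs]; exact hs
  · intro hr; exact ⟨r, hr, h r hr⟩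

lemma reductRule_simple (Y : Set Lit) (r : Rule)
    (hh : ∃ l : Lit, r.head = Fml.lit l)
    (hb : (∃ l : Lit, r.body = Fml.lit l) ∨ r.body = Fml.top) :
    ReductRule Y r = r := by
  obtain ⟨l, hl⟩ := hh
  rcases hb with ⟨l', hl'⟩ | hl' <;>
    · cases r
      simp only at hl hl'
      subst hl; subst hl'
      simp [ReductRule, Reduct]

/-- Same SE-models implies strong equivalence. -/
lemma strongEq_of_se (P Q : Prog)
    (h : ∀ X Y : Set Lit, SEModel P X Y ↔ SEModel Q X Y) : StrongEq P Q := by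
  have main : ∀ (P' Q' : Prog), (∀ X Y : Set Lit, SEModel P' X Y ↔ SEModel Q' X Y) →
      ∀ (R : Prog) (Y : Set Lit), AnswerSet Y (P' ∪ R) → AnswerSet Y (Q' ∪ R) := by
    intro P' Q' hse R Y hA
    obtain ⟨hc, hsat, hmin⟩ := hA
    obtain ⟨hsP, hsR⟩ := (satProg_reduct_union Y Y P' R).mp hsat
    have hYP : SatProg Y P' := (satProg_reduct_self Y P').mp hsP
    have hseYY : SEModel Q' Y Y := (hse Y Y).mp ⟨hc, hc, subset_rfl, hYP, hsP⟩
    refine ⟨hc, ?_, ?_⟩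
    · exact (satProg_reduct_union Y Y Q' R).mpr ⟨hseYY.2.2.2.2, hsR⟩
    · intro Z hZc hZs hZY
      obtain ⟨hZQ, hZR⟩ := (satProg_reduct_union Z Y Q' R).mp hZs
      have hseZY : SEModel P' Z Y :=
        (hse Z Y).mpr ⟨hZc, hc, hZY, hseYY.2.2.2.1, hZQ⟩
      exact hmin Z hZc ((satProg_reduct_union Z Y P' R).mpr ⟨hseZY.2.2.2.2, hZR⟩) hZY
  intro R Y
  exact ⟨main P Q h R Y, main Q P (fun X Y => (h X Y).symm) R Y⟩

/-- From an SE-model of `P` that is not an SE-model of `Q`, extract a unary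
distinguishing program. -/
lemma distinguish (P Q : Prog) (X Y : Set Lit)
    (hP : SEModel P X Y) (hQ : ¬ SEModel Q X Y) :
    ∃ R : Prog,
      (∀ r ∈ R, (∃ l : Lit, r.head = Fml.lit l) ∧
        ((∃ l : Lit, r.body = Fml.lit l) ∨ r.body = Fml.top)) ∧
      ∃ Y' : Set Lit, ¬ (AnswerSet Y' (P ∪ R) ↔ AnswerSet Y' (Q ∪ R)) := by
  obtain ⟨hXc, hYc, hXY, hYP, hXPY⟩ := hP
  by_cases hYQ : SatProg Y Q
  · -- case: Y ⊨ Q but X ⊭ Qʸ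
    have hXQY : ¬ SatProg X (ReductProg Y Q) := fun hx =>
      hQ ⟨hXc, hYc, hXY, hYQ, hx⟩
    have hXneY : X ≠ Y := by
      intro he
      subst he
      exact hXQY ((satProg_reduct_self X Q).mpr hYQ)
    set R : Prog := {r | (∃ l ∈ X, r = ⟨Fml.lit l, Fml.top⟩) ∨
        (∃ l ∈ Y \ X, ∃ l' ∈ Y \ X, r = ⟨Fml.lit l, Fml.lit l'⟩)} with hRdef
    have hRshape : ∀ r ∈ R, (∃ l : Lit, r.head = Fml.lit l) ∧
        ((∃ l : Lit, r.body = Fml.lit l) ∨ r.body = Fml.top) := by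
      rintro r (⟨l, _, rfl⟩ | ⟨l, _, l', _, rfl⟩)
      · exact ⟨⟨l, rfl⟩, Or.inr rfl⟩
      · exact ⟨⟨l, rfl⟩, Or.inl ⟨l', rfl⟩⟩
    have hRred : ∀ W : Set Lit, ReductProg W R = R := fun W =>
      reductProg_id W R (fun r hr => reductRule_simple W r (hRshape r hr).1 (hRshape r hr).2)
    refine ⟨R, hRshape, Y, ?_⟩
    intro hiff
    -- Y is an answer set of Q ∪ R
    have hAQ : AnswerSet Y (Q ∪ R) := by
      refine ⟨hYc, ?_, ?_⟩
      · refine (satProg_reduct_union Y Y Q R).mpr ⟨(satProg_reduct_self Y Q).mpr hYQ, ?_⟩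
        rw [hRred]
        rintro r (⟨l, hl, rfl⟩ | ⟨l, hl, l', hl', rfl⟩) hb
        · exact hXY hl
        · exact hl.1
      · intro Z hZc hZs hZY
        obtain ⟨hZQ, hZR⟩ := (satProg_reduct_union Z Y Q R).mp hZs
        rw [hRred] at hZR
        have hXZ : X ⊆ Z := by
          intro l hl
          exact hZR ⟨Fml.lit l, Fml.top⟩ (Or.inl ⟨l, hl, rfl⟩) trivial
        by_cases hex : ∃ l', l' ∈ Z ∧ l' ∈ Y \ X
        · obtain ⟨l', hl'Z, hl'YX⟩ := hex
          have hYZ : Y ⊆ Z := by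
            intro l hl
            by_cases hlX : l ∈ X
            · exact hXZ hlX
            · exact hZR ⟨Fml.lit l, Fml.lit l'⟩
                (Or.inr ⟨l, ⟨hl, hlX⟩, l', hl'YX, rfl⟩) hl'Z
          exact Set.Subset.antisymm hZY hYZ
        · exfalso
          have hZX : Z = X := by
            apply Set.Subset.antisymm _ hXZ
            intro l hl
            by_contra hlX
            exact hex ⟨l, hl, hZY hl, hlX⟩
          exact hXQY (hZX ▸ hZQ)
    -- Y is not an answer set of P ∪ R
    have hAP : AnswerSet Y (P ∪ R) := hiff.mpr hAQ
    obtain ⟨_, _, hmin⟩ := hAP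
    apply hXneY
    apply hmin X hXc _ hXY
    refine (satProg_reduct_union X Y P R).mpr ⟨hXPY, ?_⟩
    rw [hRred]
    rintro r (⟨l, hl, rfl⟩ | ⟨l, hl, l', hl', rfl⟩) hb
    · exact hl
    · exact absurd hb hl'.2
  · -- case: Y ⊭ Q
    set R : Prog := {r | ∃ l ∈ Y, r = (⟨Fml.lit l, Fml.top⟩ : Rule)} with hRdef
    have hRshape : ∀ r ∈ R, (∃ l : Lit, r.head = Fml.lit l) ∧
        ((∃ l : Lit, r.body = Fml.lit l) ∨ r.body = Fml.top) := by
      rintro r ⟨l, _, rfl⟩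
      exact ⟨⟨l, rfl⟩, Or.inr rfl⟩
    have hRred : ∀ W : Set Lit, ReductProg W R = R := fun W =>
      reductProg_id W R (fun r hr => reductRule_simple W r (hRshape r hr).1 (hRshape r hr).2)
    refine ⟨R, hRshape, Y, ?_⟩
    intro hiff
    have hAY : AnswerSet Y (P ∪ R) := by
      refine ⟨hYc, ?_, ?_⟩
      · refine (satProg_reduct_union Y Y P R).mpr ⟨(satProg_reduct_self Y P).mpr hYP, ?_⟩
        rw [hRred]
        rintro r ⟨l, hl, rfl⟩ _
        exact hl
      · intro Z hZc hZs hZY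
        obtain ⟨_, hZR⟩ := (satProg_reduct_union Z Y P R).mp hZs
        rw [hRred] at hZR
        have hYZ : Y ⊆ Z := by
          intro l hl
          exact hZR ⟨Fml.lit l, Fml.top⟩ ⟨l, hl, rfl⟩ trivial
        exact Set.Subset.antisymm hZY hYZ
    have hAQ : AnswerSet Y (Q ∪ R) := hiff.mp hAY
    obtain ⟨_, hsat, _⟩ := hAQ
    obtain ⟨hsQ, _⟩ := (satProg_reduct_union Y Y Q R).mp hsat
    exact hYQ ((satProg_reduct_self Y Q).mp hsQ)

/-- If P and Q are not strongly equivalent, they can be distinguished by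
adding rules whose head is a literal and whose body is a literal or ⊤. -/
theorem stmt5 (P Q : Prog) (h : ¬ StrongEq P Q) :
    ∃ R : Prog,
      (∀ r ∈ R, (∃ l : Lit, r.head = Fml.lit l) ∧
        ((∃ l : Lit, r.body = Fml.lit l) ∨ r.body = Fml.top)) ∧
      ∃ Y : Set Lit, ¬ (AnswerSet Y (P ∪ R) ↔ AnswerSet Y (Q ∪ R)) := by
  have hdiff : ¬ ∀ X Y : Set Lit, SEModel P X Y ↔ SEModel Q X Y :=
    fun hh => h (strongEq_of_se P Q hh)
  push_neg at hdiff
  obtain ⟨X, Y, hXY⟩ := hdiff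
  rcases hXY with ⟨hPse, hQse⟩ | ⟨hPse, hQse⟩
  · exact distinguish P Q X Y hPse hQse
  · obtain ⟨R, hR, Y', hY'⟩ := distinguish Q P X Y hQse hPse
    exact ⟨R, hR, Y', fun hi => hY' hi.symm⟩
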